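/- Closure under conditioning implies the rectangularity membership condition: suppose P⁺ is closed under conditioning, i.e., for every (Pr,α) ∈ P⁺ and every event G ⊆ S with Pr(G) > 0, also (Pr|G, α) ∈ P⁺, and suppose C(P⁺|ᵖF) is convex for every event F ⊆ S. Then condition (a) of p-rectangularity holds: for all events E, F ⊆ S and all (Pr₁,α₁), (Pr₂,α₂), (Pr₃,α₃) ∈ P⁺ with Pr₁(E∩F) > 0 and Pr₂(Eᶜ∩F) > 0, the vector α₃·Pr₃(E∩F)·α₁·(Pr₁|(E∩F)) + α₃·Pr₃(Eᶜ∩F)·α₂·(Pr₂|(Eᶜ∩F)) lies in the closure of C(P⁺|ᵖF). -/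

import Mathlib

open scoped BigOperators

noncomputable section

variable {S : Type*}

/-- `Pr : S → ℝ` is a probability measure on the finite state space `S`. -/
def IsProb [Fintype S] (Pr : S → ℝ) : Prop :=
  (∀ s, 0 ≤ Pr s) ∧ (∑ s, Pr s) = 1

/-- A set of weighted probability measures: each element is a pair `(Pr, α)` with `Pr`
a probability measure and `α ∈ [0,1]`, with at most one weight per measure. -/
def IsWeightedSet [Fintype S] (W : Set ((S → ℝ) × ℝ)) : Prop :=
  (∀ w ∈ W, IsProb w.1 ∧ w.2 ∈ Set.Icc (0 : ℝ) 1) ∧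
    ∀ w ∈ W, ∀ w' ∈ W, w.1 = w'.1 → w.2 = w'.2

/-- The regret of act `f` at state `s` with respect to menu `M`:
`(max_{g ∈ M} g s) - f s`. -/
def regretAt (M : Finset (S → ℝ)) (f : S → ℝ) (s : S) : ℝ :=
  sSup ((fun g => g s) '' (M : Set (S → ℝ))) - f s

/-- The maximum weighted expected regret of `f` with respect to menu `M` and the
weighted set `W` of probability measures (it is `0` when `W = ∅`, since `sSup ∅ = 0`
for real numbers). -/
def wregret [Fintype S] (W : Set ((S → ℝ) × ℝ)) (M : Finset (S → ℝ)) (f : S → ℝ) : ℝ :=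
  sSup {x | ∃ w ∈ W, x = w.2 * ∑ s, w.1 s * regretAt M f s}

/-- `C(P⁺)`: the set of subprobability vectors dominated by some weighted measure in `W`. -/
def Cset (W : Set ((S → ℝ) × ℝ)) : Set (S → ℝ) :=
  {p | (∀ s, 0 ≤ p s) ∧ ∃ w ∈ W, ∀ s, p s ≤ w.2 * w.1 s}

/-- The probability of the event `E` under `Pr`. -/
def probOf (Pr : S → ℝ) (E : Finset S) : ℝ := ∑ s ∈ E, Pr s

/-- The conditional probability measure `Pr(· | E)`. -/
def condProb [DecidableEq S] (Pr : S → ℝ) (E : Finset S) : S → ℝ :=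
  fun s => if s ∈ E then Pr s / probOf Pr E else 0

/-- Prior-by-prior updating: `P⁺|ᵖE = {(Pr|E, α) : (Pr,α) ∈ P⁺, Pr(E) > 0}`. -/
def updP [DecidableEq S] (W : Set ((S → ℝ) × ℝ)) (E : Finset S) : Set ((S → ℝ) × ℝ) :=
  {w' | ∃ w ∈ W, 0 < probOf w.1 E ∧ w' = (condProb w.1 E, w.2)}

/-- `ūP(E) = sup {α·Pr(E) : (Pr,α) ∈ P⁺}`. -/
def ubar (W : Set ((S → ℝ) × ℝ)) (E : Finset S) : ℝ :=
  sSup {x | ∃ w ∈ W, x = w.2 * probOf w.1 E}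

/-- The likelihood-updated weight `αˡ_E` of the measure `Pr|E`:
`sup {α′·Pr′(E)/ūP(E) : (Pr′,α′) ∈ P⁺, Pr′|E = Pr|E}`. -/
def alphaL [DecidableEq S] (W : Set ((S → ℝ) × ℝ)) (E : Finset S) (Pr : S → ℝ) : ℝ :=
  sSup {x | ∃ w ∈ W, condProb w.1 E = condProb Pr E ∧ x = w.2 * probOf w.1 E / ubar W E}

/-- Likelihood updating: `P⁺|ˡE = {(Pr|E, αˡ_E) : (Pr,α) ∈ P⁺, Pr(E) > 0}`. -/
def updL [DecidableEq S] (W : Set ((S → ℝ) × ℝ)) (E : Finset S) : Set ((S → ℝ) × ℝ) :=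
  {w' | ∃ w ∈ W, 0 < probOf w.1 E ∧ w' = (condProb w.1 E, alphaL W E w.1)} 

/-- The MWER choice set: those `f ∈ M'` minimizing `wregret W M` over `M'`; regret is
computed with respect to the reference menu `M` and beliefs `W`. -/
def choiceSet [Fintype S] (M : Finset (S → ℝ)) (W : Set ((S → ℝ) × ℝ))
    (M' : Finset (S → ℝ)) : Set (S → ℝ) :=
  {f | f ∈ M' ∧ ∀ g ∈ M', wregret W M f ≤ wregret W M g}

/-- The maximum weighted expected value `Ē_{W}(θ) = sup_{(Pr,α) ∈ W} α·Σ_s Pr(s)·θ(s)`. -/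
def Ebar [Fintype S] (W : Set ((S → ℝ) × ℝ)) (θ : S → ℝ) : ℝ :=
  sSup {x | ∃ w ∈ W, x = w.2 * ∑ s, w.1 s * θ s}

/-- Axiom DC-M for the weighted set `W` under the updating rule `upd`. -/
def DCM [Fintype S] [DecidableEq S]
    (upd : Set ((S → ℝ) × ℝ) → Finset S → Set ((S → ℝ) × ℝ))
    (W : Set ((S → ℝ) × ℝ)) : Prop :=
  ∀ (E F : Finset S) (M M' : Finset (S → ℝ)), M.Nonempty → M' ⊆ M →
    ∀ f ∈ M', ∀ g ∈ M',
      f ∈ choiceSet M (upd W (E ∩ F)) M' → f ∈ choiceSet M (upd W (Eᶜ ∩ F)) M' →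
        f ∈ choiceSet M (upd W F) M' ∧
          (g ∉ choiceSet M (upd W (E ∩ F)) M' → g ∉ choiceSet M (upd W F) M')

/-- Separability (SEP) of the weighted regret of `f` with respect to menu `M` and the
weighted set `W`, under the updating rule `upd`. -/
def Separable [Fintype S] [DecidableEq S]
    (upd : Set ((S → ℝ) × ℝ) → Finset S → Set ((S → ℝ) × ℝ))
    (W : Set ((S → ℝ) × ℝ)) (M : Finset (S → ℝ)) (f : S → ℝ) : Prop :=
  ∀ E F : Finset S, 0 < ubar W (E ∩ F) → 0 < ubar W (Eᶜ ∩ F) →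
    (wregret (upd W F) M f =
      sSup {x | ∃ w ∈ upd W F, x =
        w.2 * (probOf w.1 (E ∩ F) * wregret (upd W (E ∩ F)) M f +
          probOf w.1 (Eᶜ ∩ F) * wregret (upd W (Eᶜ ∩ F)) M f)}) ∧
    (wregret (upd W (E ∩ F)) M f ≠ 0 →
      sSup {x | ∃ w ∈ upd W F, x =
        w.2 * probOf w.1 (Eᶜ ∩ F) * wregret (upd W (Eᶜ ∩ F)) M f} <
        wregret (upd W F) M f)

/-- `p`-rectangularity of the weighted set `W` (prior-by-prior updating; the updated
weights equal the original weights). -/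
def pRectangular [Fintype S] [DecidableEq S] (W : Set ((S → ℝ) × ℝ)) : Prop :=
  ∀ E F : Finset S,
    (∀ w₁ ∈ W, ∀ w₂ ∈ W, ∀ w₃ ∈ W,
      0 < probOf w₁.1 (E ∩ F) → 0 < probOf w₂.1 (Eᶜ ∩ F) →
      (fun s => w₃.2 * probOf w₃.1 (E ∩ F) * (w₁.2 * condProb w₁.1 (E ∩ F) s) +
          w₃.2 * probOf w₃.1 (Eᶜ ∩ F) * (w₂.2 * condProb w₂.1 (Eᶜ ∩ F) s)) ∈
        closure (Cset (updP W F))) ∧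
    (∀ δ : ℝ, 0 < δ → 0 < ubar W F →
      ∃ w ∈ updP W F,
        sSup {x | ∃ w' ∈ W, x = w'.2 * probOf w'.1 (Eᶜ ∩ F)} <
          w.2 * (δ * probOf w.1 (E ∩ F) + probOf w.1 (Eᶜ ∩ F))) ∧
    (∀ θ : S → ℝ, (∀ s, 0 ≤ θ s) →
      Ebar (updP W F) θ ≤
        sSup {x | ∃ w ∈ updP W F, x =
          w.2 * (probOf w.1 (E ∩ F) * Ebar (updP W (E ∩ F)) θ +
            probOf w.1 (Eᶜ ∩ F) * Ebar (updP W (Eᶜ ∩ F)) θ)})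

/-- `l`-rectangularity of the weighted set `W` (likelihood updating; the updated
weights are the likelihood-updated weights `αˡ`). -/
def lRectangular [Fintype S] [DecidableEq S] (W : Set ((S → ℝ) × ℝ)) : Prop :=
  ∀ E F : Finset S,
    (∀ w₁ ∈ W, ∀ w₂ ∈ W, ∀ w₃ ∈ W,
      0 < probOf w₁.1 (E ∩ F) → 0 < probOf w₂.1 (Eᶜ ∩ F) →
      (fun s => w₃.2 * probOf w₃.1 (E ∩ F) * (alphaL W (E ∩ F) w₁.1 * condProb w₁.1 (E ∩ F) s) +
          w₃.2 * probOf w₃.1 (Eᶜ ∩ F) * (alphaL W (Eᶜ ∩ F) w₂.1 * condProb w₂.1 (Eᶜ ∩ F) s)) ∈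
        closure (Cset (updL W F))) ∧
    (∀ δ : ℝ, 0 < δ → 0 < ubar W F →
      ∃ w ∈ updL W F,
        sSup {x | ∃ w' ∈ W, x = w'.2 * probOf w'.1 (Eᶜ ∩ F)} <
          w.2 * (δ * probOf w.1 (E ∩ F) + probOf w.1 (Eᶜ ∩ F))) ∧
    (∀ θ : S → ℝ, (∀ s, 0 ≤ θ s) →
      Ebar (updL W F) θ ≤
        sSup {x | ∃ w ∈ updL W F, x =
          w.2 * (probOf w.1 (E ∩ F) * Ebar (updL W (E ∩ F)) θ +
            probOf w.1 (Eᶜ ∩ F) * Ebar (updL W (Eᶜ ∩ F)) θ)})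


lemma probOf_nonneg_aux {Pr : S → ℝ} (h : ∀ s, 0 ≤ Pr s) (E : Finset S) :
    0 ≤ probOf Pr E := Finset.sum_nonneg fun s _ => h s

lemma condProb_nonneg_aux [DecidableEq S] {Pr : S → ℝ} (h : ∀ s, 0 ≤ Pr s)
    (G : Finset S) (s : S) : 0 ≤ condProb Pr G s := by
  unfold condProb
  split
  · exact div_nonneg (h s) (probOf_nonneg_aux h G)
  · exact le_refl 0

lemma probOf_condProb_aux [DecidableEq S] {Pr : S → ℝ} {G F : Finset S}
    (hGF : G ⊆ F) (hpos : 0 < probOf Pr G) :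
    probOf (condProb Pr G) F = 1 := by
  unfold probOf condProb
  rw [Finset.sum_ite_mem, Finset.inter_eq_right.mpr hGF, ← Finset.sum_div]
  exact div_self (ne_of_gt hpos)

lemma condProb_condProb_aux [DecidableEq S] {Pr : S → ℝ} {G F : Finset S}
    (hGF : G ⊆ F) (hpos : 0 < probOf Pr G) :
    condProb (condProb Pr G) F = condProb Pr G := by
  funext s
  by_cases hs : s ∈ F
  · simp [condProb, hs, probOf_condProb_aux hGF hpos]
  · have hsG : s ∉ G := fun h => hs (hGF h)
    simp [condProb, hs, hsG]

/-- the conditional measure (on a subset of F) with its weight, as a member of `Cset (updP W F)`. -/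
lemma mem_Cset_updP_aux [Fintype S] [DecidableEq S] {W : Set ((S → ℝ) × ℝ)}
    (hW : IsWeightedSet W)
    (hcond : ∀ w ∈ W, ∀ G : Finset S, 0 < probOf w.1 G → (condProb w.1 G, w.2) ∈ W)
    {w : (S → ℝ) × ℝ} (hw : w ∈ W) {G F : Finset S} (hGF : G ⊆ F)
    (hpos : 0 < probOf w.1 G) :
    (fun s => w.2 * condProb w.1 G s) ∈ Cset (updP W F) := by
  have hprops := hW.1
  have hPrnn := (hprops w hw).1.1
  have hwG : (condProb w.1 G, w.2) ∈ W := hcond w hw G hpos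
  have hmem : ((condProb w.1 G, w.2) : (S → ℝ) × ℝ) ∈ updP W F := by
    refine ⟨(condProb w.1 G, w.2), hwG, ?_, ?_⟩
    · simpa [probOf_condProb_aux hGF hpos] using one_pos
    · simp [condProb_condProb_aux hGF hpos]
  refine ⟨fun s => mul_nonneg (hprops w hw).2.1 (condProb_nonneg_aux hPrnn G s),
    ⟨(condProb w.1 G, w.2), hmem, fun s => le_refl _⟩⟩

lemma zero_mem_Cset_aux {W : Set ((S → ℝ) × ℝ)} {p : S → ℝ} (hp : p ∈ Cset W) :
    (0 : S → ℝ) ∈ Cset W := by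
  obtain ⟨hnn, w, hw, hle⟩ := hp
  exact ⟨fun s => le_refl 0, w, hw, fun s => le_trans (hnn s) (hle s)⟩

lemma convex_combo_aux {C : Set (S → ℝ)} (hC : Convex ℝ C)
    (h0 : (0 : S → ℝ) ∈ C) {q₁ q₂ : S → ℝ} (h1 : q₁ ∈ C) (h2 : q₂ ∈ C)
    {a b : ℝ} (ha : 0 ≤ a) (hb : 0 ≤ b) (hab : a + b ≤ 1) :
    a • q₁ + b • q₂ ∈ C := by
  rcases eq_or_lt_of_le (add_nonneg ha hb) with h | h
  · have ha0 : a = 0 := by linarith [(add_eq_zero_iff_of_nonneg ha hb).mp h.symm]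
    have hb0 : b = 0 := by linarith [(add_eq_zero_iff_of_nonneg ha hb).mp h.symm]
    simpa [ha0, hb0] using h0
  · set t := a + b with ht
    have hz : (a / t) • q₁ + (b / t) • q₂ ∈ C :=
      hC h1 h2 (div_nonneg ha h.le) (div_nonneg hb h.le) (by field_simp; exact ht.symm)
    have := hC h0 hz (by linarith : (0:ℝ) ≤ 1 - t) h.le (by ring)
    have heq : (1 - t) • (0 : S → ℝ) + t • ((a / t) • q₁ + (b / t) • q₂)
        = a • q₁ + b • q₂ := by
      rw [smul_zero, zero_add, smul_add, smul_smul, smul_smul,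
        mul_div_cancel₀ _ h.ne', mul_div_cancel₀ _ h.ne']
    rwa [heq] at this

/-- if `W` is closed under conditioning and `C(W|ᵖF)` is convex for
every event `F`, then condition (a) of `p`-rectangularity holds. -/
theorem stmt_15 [Fintype S] [Nonempty S] [DecidableEq S]
    (W : Set ((S → ℝ) × ℝ)) (hW : IsWeightedSet W)
    (hcond : ∀ w ∈ W, ∀ G : Finset S, 0 < probOf w.1 G → (condProb w.1 G, w.2) ∈ W)
    (hconv : ∀ F : Finset S, Convex ℝ (Cset (updP W F))) :
    ∀ E F : Finset S, ∀ w₁ ∈ W, ∀ w₂ ∈ W, ∀ w₃ ∈ W,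
      0 < probOf w₁.1 (E ∩ F) → 0 < probOf w₂.1 (Eᶜ ∩ F) →
      (fun s => w₃.2 * probOf w₃.1 (E ∩ F) * (w₁.2 * condProb w₁.1 (E ∩ F) s) +
          w₃.2 * probOf w₃.1 (Eᶜ ∩ F) * (w₂.2 * condProb w₂.1 (Eᶜ ∩ F) s)) ∈
        closure (Cset (updP W F)) := by
  
  intro E F w₁ hw₁ w₂ hw₂ w₃ hw₃ h1 h2
  have hα₃ := (hW.1 w₃ hw₃).2
  have hPr₃ := (hW.1 w₃ hw₃).1
  -- the two conditional measures as elements of Cset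
  have hq₁ := mem_Cset_updP_aux hW hcond hw₁ (Finset.inter_subset_right) h1
  have hq₂ := mem_Cset_updP_aux hW hcond hw₂ (Finset.inter_subset_right) h2
  have h0 := zero_mem_Cset_aux hq₁
  set a := w₃.2 * probOf w₃.1 (E ∩ F) with hadef
  set b := w₃.2 * probOf w₃.1 (Eᶜ ∩ F) with hbdef
  have hEF : E ∩ F = F ∩ E := Finset.inter_comm _ _
  have hEcF : Eᶜ ∩ F = F \ E := by ext s; simp [Finset.mem_sdiff, and_comm]
  have hsum : probOf w₃.1 (E ∩ F) + probOf w₃.1 (Eᶜ ∩ F) = probOf w₃.1 F := by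
    rw [hEF, hEcF]
    exact Finset.sum_inter_add_sum_sdiff F E w₃.1
  have hPrF_le : probOf w₃.1 F ≤ 1 := by
    rw [← hPr₃.2]
    exact Finset.sum_le_sum_of_subset_of_nonneg (Finset.subset_univ F)
      (fun s _ _ => hPr₃.1 s)
  have ha : 0 ≤ a := mul_nonneg hα₃.1 (probOf_nonneg_aux hPr₃.1 _)
  have hb : 0 ≤ b := mul_nonneg hα₃.1 (probOf_nonneg_aux hPr₃.1 _)
  have hab : a + b ≤ 1 := by
    have : a + b = w₃.2 * probOf w₃.1 F := by rw [hadef, hbdef, ← mul_add, hsum]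
    rw [this]
    exact mul_le_one₀ hα₃.2 (probOf_nonneg_aux hPr₃.1 _) hPrF_le
  have key := convex_combo_aux (hconv F) h0 hq₁ hq₂ ha hb hab
  have heq : a • (fun s => w₁.2 * condProb w₁.1 (E ∩ F) s)
      + b • (fun s => w₂.2 * condProb w₂.1 (Eᶜ ∩ F) s)
      = (fun s => a * (w₁.2 * condProb w₁.1 (E ∩ F) s) +
          b * (w₂.2 * condProb w₂.1 (Eᶜ ∩ F) s)) := by
    funext s; simp [smul_eq_mul]
  rw [heq] at key
  exact subset_closure key
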